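/- Let G be a graph and G' be obtained from G by attaching a pendant vertex to every vertex of G. If D is an independent dominating set of G, then U* := (V(G) \ D) ∪ {v' : v ∈ D} is the unique minimum vertex cover of G' among those disjoint from D; in particular, (∅, D) is a feasible pre-assignment of G' of size |D| under the Mixed model. -/

import Mathlib

variable {V : Type*} [Fintype V] [DecidableEq V]

/-- `C` is a vertex cover of `G`: every edge has an endpoint in `C`. -/
def IsVertexCover (G : SimpleGraph V) (C : Finset V) : Prop :=
  ∀ ⦃u v : V⦄, G.Adj u v → u ∈ C ∨ v ∈ C

/-- `C` is a minimum vertex cover of `G`. -/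
def IsMinVertexCover (G : SimpleGraph V) (C : Finset V) : Prop :=
  IsVertexCover G C ∧ ∀ D : Finset V, IsVertexCover G D → C.card ≤ D.card

/-- The vertex cover number τ(G). -/
noncomputable def tau (G : SimpleGraph V) : ℕ :=
  sInf {n : ℕ | ∃ C : Finset V, IsVertexCover G C ∧ C.card = n}

/-- `I` is an independent set of `G`. -/
def IsIndepSet (G : SimpleGraph V) (I : Finset V) : Prop :=
  ∀ u ∈ I, ∀ v ∈ I, ¬ G.Adj u v

/-- `D` is a dominating set of `G`. -/
def IsDomSet (G : SimpleGraph V) (D : Finset V) : Prop :=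
  ∀ v : V, v ∈ D ∨ ∃ u ∈ D, G.Adj u v

/-- N(X): vertices outside `X` adjacent to some vertex of `X`. -/
def NFinset (G : SimpleGraph V) [DecidableRel G.Adj] (X : Finset V) : Finset V :=
  (X.biUnion fun v => G.neighborFinset v) \ X

/-- `C` is a vertex cover of the induced subgraph `G - S` (vertices outside `S`). -/
def IsVCOutside (G : SimpleGraph V) (S C : Finset V) : Prop :=
  Disjoint C S ∧ ∀ ⦃u v : V⦄, G.Adj u v → u ∉ S → v ∉ S → u ∈ C ∨ v ∈ C

/-- `C` is a minimum vertex cover of the induced subgraph `G - S`. -/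
def IsMinVCOutside (G : SimpleGraph V) (S C : Finset V) : Prop :=
  IsVCOutside G S C ∧ ∀ D : Finset V, IsVCOutside G S D → C.card ≤ D.card

/-- Feasibility under the Include model. -/
def FeasibleInclude (G : SimpleGraph V) (U : Finset V) : Prop :=
  ∃! C : Finset V, IsMinVertexCover G C ∧ U ⊆ C

/-- Feasibility under the Exclude model. -/
def FeasibleExclude (G : SimpleGraph V) (U : Finset V) : Prop :=
  ∃! C : Finset V, IsMinVertexCover G C ∧ Disjoint C U

/-- Feasibility under the Mixed model. -/
def FeasibleMixed (G : SimpleGraph V) (Uin Uex : Finset V) : Prop :=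
  ∃! C : Finset V, IsMinVertexCover G C ∧ Uin ⊆ C ∧ Disjoint C Uex

/-- The graph `G'` obtained by attaching a pendant vertex `Sum.inr v`
to each vertex `Sum.inl v` of `G`. -/
def pendant (G : SimpleGraph V) : SimpleGraph (V ⊕ V) where
  Adj x y :=
    match x, y with
    | Sum.inl u, Sum.inl v => G.Adj u v
    | Sum.inl u, Sum.inr v => u = v
    | Sum.inr u, Sum.inl v => u = v
    | Sum.inr _, Sum.inr _ => False
  symm := by
    constructor
    rintro (u | u) (v | v) h
    · exact h.symm
    · exact h.symm
    · exact h.symm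
    · exact h
  loopless := by
    constructor
    rintro (u | u) h
    · exact G.loopless.irrefl u h
    · exact h

section Aux
variable {V : Type*} [Fintype V] [DecidableEq V]

lemma pendant_adj_lr (G : SimpleGraph V) (v : V) :
    (pendant G).Adj (Sum.inl v) (Sum.inr v) := rfl

lemma card_lb (G : SimpleGraph V) (C : Finset (V ⊕ V))
    (hC : IsVertexCover (pendant G) C) : Fintype.card V ≤ C.card := by
  classical
  have := Finset.card_le_card_of_injOn
    (f := fun v : V => if Sum.inl v ∈ C then (Sum.inl v : V ⊕ V) else Sum.inr v)
    (s := Finset.univ) (t := C)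
    (by
      intro v _
      by_cases h : Sum.inl v ∈ C
      · simp [h]
      · have := hC (pendant_adj_lr G v)
        simp only [h, if_neg, false_or, if_false] at this ⊢
        tauto)
    (by
      intro u _ v _ h
      by_cases hu : Sum.inl u ∈ C <;> by_cases hv : Sum.inl v ∈ C <;>
        simp [hu, hv] at h <;> try exact h
      all_goals cases h)
  simpa using this

lemma Ustar_cover (G : SimpleGraph V) (D : Finset V) (hI : IsIndepSet G D) :
    IsVertexCover (pendant G)
      (((Finset.univ \ D).image (Sum.inl : V → V ⊕ V)) ∪ (D.image (Sum.inr : V → V ⊕ V))) := by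
  rintro (u | u) (v | v) h
  · by_cases hu : u ∈ D
    · by_cases hv : v ∈ D
      · exact absurd h (hI u hu v hv)
      · right; simp [hv]
    · left; simp [hu]
  · have hv : u = v := h
    subst hv
    by_cases hu : u ∈ D
    · right; simp [hu]
    · left; simp [hu]
  · have hv : u = v := h
    subst hv
    by_cases hu : u ∈ D
    · left; simp [hu]
    · right; simp [hu]
  · cases h

lemma Ustar_card (G : SimpleGraph V) (D : Finset V) :
    (((Finset.univ \ D).image (Sum.inl : V → V ⊕ V)) ∪ (D.image (Sum.inr : V → V ⊕ V))).card
      = Fintype.card V := by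
  rw [Finset.card_union_of_disjoint, Finset.card_image_of_injective _ Sum.inl_injective,
    Finset.card_image_of_injective _ Sum.inr_injective]
  · rw [Finset.card_sdiff_of_subset (Finset.subset_univ D)]
    have := Finset.card_le_univ D
    simp; omega
  · simp [Finset.disjoint_left]

end Aux

/-- for an independent dominating set D of G, the set
U* = (V(G) \ D) ∪ {v' : v ∈ D} is the unique minimum vertex cover of G' disjoint
from D; in particular (∅, D) is a Mixed-feasible pre-assignment of size |D|. -/
theorem stmt9 (G : SimpleGraph V) (D : Finset V)
    (hI : IsIndepSet G D) (hD : IsDomSet G D) :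
    (IsMinVertexCover (pendant G)
        (((Finset.univ \ D).image (Sum.inl : V → V ⊕ V)) ∪ (D.image (Sum.inr : V → V ⊕ V))) ∧
      (∀ U : Finset (V ⊕ V), IsMinVertexCover (pendant G) U →
        Disjoint U (D.image (Sum.inl : V → V ⊕ V)) →
          U = ((Finset.univ \ D).image (Sum.inl : V → V ⊕ V)) ∪ (D.image (Sum.inr : V → V ⊕ V)))) ∧
    FeasibleMixed (pendant G) ∅ (D.image (Sum.inl : V → V ⊕ V)) ∧
    (∅ : Finset (V ⊕ V)).card + (D.image (Sum.inl : V → V ⊕ V)).card = D.card := by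
  
  classical
  set Ustar := (((Finset.univ \ D).image (Sum.inl : V → V ⊕ V)) ∪ (D.image (Sum.inr : V → V ⊕ V))) with hUstar
  have hcov : IsVertexCover (pendant G) Ustar := Ustar_cover G D hI
  have hmin : IsMinVertexCover (pendant G) Ustar := by
    refine ⟨hcov, fun C hC => ?_⟩
    calc Ustar.card = Fintype.card V := Ustar_card G D
      _ ≤ C.card := card_lb G C hC
  have hdisj : Disjoint Ustar (D.image (Sum.inl : V → V ⊕ V)) := by
    simp only [hUstar, Finset.disjoint_left, Finset.mem_union, Finset.mem_image,
      Finset.mem_sdiff, Finset.mem_univ, true_and]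
    rintro x (⟨v, hv, rfl⟩ | ⟨v, hv, rfl⟩) ⟨w, hw, hwx⟩
    · exact hv (Sum.inl_injective hwx ▸ hw)
    · exact Sum.inl_ne_inr hwx
  have huniq : ∀ U : Finset (V ⊕ V), IsMinVertexCover (pendant G) U →
      Disjoint U (D.image (Sum.inl : V → V ⊕ V)) → U = Ustar := by
    intro U hU hUd
    have hsub : Ustar ⊆ U := by
      intro x hx
      simp only [hUstar, Finset.mem_union, Finset.mem_image, Finset.mem_sdiff,
        Finset.mem_univ, true_and] at hx
      rcases hx with ⟨v, hv, rfl⟩ | ⟨v, hv, rfl⟩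
      · rcases hD v with hvD | ⟨u, hu, hadj⟩
        · exact absurd hvD hv
        · have hcover := hU.1 (show (pendant G).Adj (Sum.inl u) (Sum.inl v) from hadj)
          have : Sum.inl u ∉ U := by
            intro h
            exact (Finset.disjoint_left.mp hUd h) (Finset.mem_image_of_mem _ hu)
          tauto
      · have hcover := hU.1 (pendant_adj_lr G v)
        have : Sum.inl v ∉ U := by
          intro h
          exact (Finset.disjoint_left.mp hUd h) (Finset.mem_image_of_mem _ hv)
        tauto
    have hcard : U.card ≤ Ustar.card := hU.2 Ustar hcov
    exact (Finset.eq_of_subset_of_card_le hsub hcard).symm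
  refine ⟨⟨hmin, huniq⟩, ?_, ?_⟩
  · exact ⟨Ustar, ⟨hmin, Finset.empty_subset _, hdisj⟩, fun U hU => huniq U hU.1 hU.2.2⟩
  · simp [Finset.card_image_of_injective _ Sum.inl_injective]
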